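/- Let (C, ∂) be a chain complex over ℤ/2 with C = C_U ⊕ C_V ⊕ C_W as above (barricade conditions for both U and V). Let a, b be homologous cycles in C (i.e. a − b = ∂p for some p). Then e := π_{V^c}(a) + π_V(b) − (∂ π_V − π_V ∂)(p) is a cycle homologous to a, where π_{V^c} = π_U + π_W. -/
import Mathlib


open scoped Classical

/-- The projection of a chain onto the subspace spanned by the basis elements
lying in `S`. -/
noncomputable def projS {ι : Type*} (S : Set ι) (c : ι →₀ ZMod 2) : ι →₀ ZMod 2 :=
  c.filter (· ∈ S)

lemma projS_sub {ι : Type*} (S : Set ι) (x y : ι →₀ ZMod 2) :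
    projS S (x - y) = projS S x - projS S y := by
  ext i
  simp only [projS, Finsupp.filter_apply, Finsupp.sub_apply]
  split_ifs <;> simp

lemma projS_decomp {ι : Type*} (SU SV SW : Set ι)
    (hdUV : Disjoint SU SV) (hdUW : Disjoint SU SW) (hdVW : Disjoint SV SW)
    (hcover : SU ∪ SV ∪ SW = Set.univ) (c : ι →₀ ZMod 2) :
    projS SU c + projS SW c + projS SV c = c := by
  ext i
  have hi : i ∈ SU ∪ SV ∪ SW := hcover ▸ Set.mem_univ i
  simp only [projS, Finsupp.add_apply, Finsupp.filter_apply]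
  rcases hi with (hU | hV) | hW
  · rw [if_pos hU, if_neg (fun h => hdUW.ne_of_mem hU h rfl),
      if_neg (fun h => hdUV.ne_of_mem hU h rfl)]; ring
  · rw [if_neg (fun h => hdUV.ne_of_mem h hV rfl),
      if_neg (fun h => hdVW.ne_of_mem hV h rfl), if_pos hV]; ring
  · rw [if_neg (fun h => hdUW.ne_of_mem h hW rfl), if_pos hW,
      if_neg (fun h => hdVW.ne_of_mem h hW rfl)]; ring

/-- For a `ℤ/2` chain complex with basis decomposition `C = C_U ⊕ C_V ⊕ C_W`
satisfying the barricade conditions for both `U` and `V`, and homologous cycles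
`a`, `b` (with `a − b = ∂p`), the mixed chain
`e := π_{V^c}(a) + π_V(b) − (∂ π_V − π_V ∂)(p)` (where `π_{V^c} = π_U + π_W`)
is a cycle homologous to `a`. -/
theorem stmt7 {ι : Type*} [Fintype ι]
    (SU SV SW : Set ι)
    (hdUV : Disjoint SU SV) (hdUW : Disjoint SU SW) (hdVW : Disjoint SV SW)
    (hcover : SU ∪ SV ∪ SW = Set.univ)
    (D : (ι →₀ ZMod 2) →ₗ[ZMod 2] (ι →₀ ZMod 2))
    (hsq : ∀ c, D (D c) = 0)
    -- barricade: no differential into `C_U` except from `C_U`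
    (hU : ∀ c : ι →₀ ZMod 2, projS SU (D (projS SV c + projS SW c)) = 0)
    -- barricade: no differential into `C_V` except from `C_V`
    (hV : ∀ c : ι →₀ ZMod 2, projS SV (D (projS SU c + projS SW c)) = 0)
    (a b p : ι →₀ ZMod 2)
    (ha : D a = 0) (hb : D b = 0) (hp : a - b = D p) :
    D ((projS SU a + projS SW a) + projS SV b - (D (projS SV p) - projS SV (D p))) = 0 ∧
    ∃ q, a - ((projS SU a + projS SW a) + projS SV b - (D (projS SV p) - projS SV (D p)))
        = D q := by
  have key : a - ((projS SU a + projS SW a) + projS SV b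
      - (D (projS SV p) - projS SV (D p))) = D (projS SV p) := by
    have hda := projS_decomp SU SV SW hdUV hdUW hdVW hcover a
    have hsub : projS SV a - projS SV b = projS SV (D p) := by
      rw [← projS_sub, hp]
    nth_rewrite 1 [← hda]
    have h2 : (projS SU a + projS SW a + projS SV a)
        - (projS SU a + projS SW a + projS SV b - (D (projS SV p) - projS SV (D p)))
        = (projS SV a - projS SV b) + D (projS SV p) - projS SV (D p) := by abel
    rw [h2, hsub]; abel
  refine ⟨?_, projS SV p, key⟩
  have he : (projS SU a + projS SW a) + projS SV b - (D (projS SV p) - projS SV (D p))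
      = a - D (projS SV p) := by
    calc (projS SU a + projS SW a) + projS SV b - (D (projS SV p) - projS SV (D p))
        = a - (a - ((projS SU a + projS SW a) + projS SV b
            - (D (projS SV p) - projS SV (D p)))) := (sub_sub_cancel _ _).symm
      _ = a - D (projS SV p) := by rw [key]
  rw [he, map_sub, ha, hsq]
  simp
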